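/- Let T be a partial 1-tilting module over an artin algebra A (i.e., pd_A(T) ≤ 1 and Ext¹_A(T,T) = 0). Then the full subcategory fac(T) of factor modules of finite direct sums of copies of T is closed under extensions in A-mod, and T is a projective object in the exact category fac(T). -/

import Mathlib

/-- The `n`-th Ext-group `Ext_A^n(M, N)` of left `A`-modules. -/
noncomputable def egrp (A : Type) [Ring A] (n : ℕ) (M N : Type) [AddCommGroup M] [Module A M]
    [AddCommGroup N] [Module A N] : Type :=
  ((_root_.Ext ℤ (ModuleCat A) n).obj (Opposite.op (ModuleCat.of A M))).obj
    (ModuleCat.of A N)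

noncomputable instance (A : Type) [Ring A] (n : ℕ) (M N : Type) [AddCommGroup M] [Module A M]
    [AddCommGroup N] [Module A N] : AddCommGroup (egrp A n M N) :=
  inferInstanceAs (AddCommGroup (((_root_.Ext ℤ (ModuleCat A) n).obj
    (Opposite.op (ModuleCat.of A M))).obj (ModuleCat.of A N)))

open CategoryTheory


section Res
variable {A : Type} [Ring A] {T : Type} [AddCommGroup T] [Module A T]
  (P₀ P₁ : ModuleCat.{0} A)
  (i : ↥P₁ →ₗ[A] ↥P₀) (p : ↥P₀ →ₗ[A] T)

/-- the two-term chain complex P₁ → P₀ -/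
noncomputable def resC : ChainComplex (ModuleCat.{0} A) ℕ :=
  ChainComplex.of
    (fun n => match n with
      | 0 => P₀
      | 1 => P₁
      | _ + 2 => ModuleCat.of A PUnit)
    (fun n => match n with
      | 0 => ModuleCat.ofHom i
      | _ + 1 => 0)
    (fun n => match n with
      | 0 => by simp
      | _ + 1 => by simp)

lemma resC_d10 : (resC P₀ P₁ i).d 1 0 = ModuleCat.ofHom i :=
  by unfold resC; simp [ChainComplex.of.d]

lemma resC_d_succ (n : ℕ) : (resC P₀ P₁ i).d (n + 2) (n + 1) = 0 :=
  by unfold resC; simp [ChainComplex.of.d]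

end Res

section Res2
variable {A : Type} [Ring A] {T : Type} [AddCommGroup T] [Module A T]
  {P₀ P₁ : ModuleCat.{0} A}
  (h0 : Module.Projective A ↥P₀) (h1 : Module.Projective A ↥P₁)
  {i : ↥P₁ →ₗ[A] ↥P₀} {p : ↥P₀ →ₗ[A] T}
  (hi : Function.Injective i) (hp : Function.Surjective p) (hexact : Function.Exact i p)

noncomputable def resP : ProjectiveResolution (ModuleCat.of A T) where
  complex := resC P₀ P₁ i
  projective n := by
    match n with
    | 0 => exact (IsProjective.iff_projective _).1 h0
    | 1 => exact (IsProjective.iff_projective _).1 h1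
    | n + 2 => exact (IsProjective.iff_projective _).1 inferInstance
  π := (ChainComplex.toSingle₀Equiv _ _).symm
    ⟨ModuleCat.ofHom p, by
      rw [resC_d10]
      ext x
      exact hexact.apply_apply_eq_zero x⟩
  quasiIso := ⟨fun n => by
    cases n with
    | zero =>
      rw [ChainComplex.quasiIsoAt₀_iff, ShortComplex.quasiIso_iff_of_zeros' _ rfl rfl rfl]
      let ip : P₁ ⟶ P₀ := ModuleCat.ofHom i
      let pp : P₀ ⟶ ModuleCat.of A T := ModuleCat.ofHom p
      have hip : ip ≫ pp = 0 := by
        ext x; exact hexact.apply_apply_eq_zero x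
      have hex : (ShortComplex.mk _ _ hip).Exact := by
        rw [ShortComplex.moduleCat_exact_iff]
        intro x hx
        exact (hexact x).1 hx
      have hepi : Epi (ShortComplex.mk _ _ hip).g := (ModuleCat.epi_iff_surjective _).2 hp
      refine (ShortComplex.exact_and_epi_g_iff_of_iso
        (ShortComplex.isoMk (Iso.refl _) (Iso.refl _) (Iso.refl _) ?_ ?_)).2 ⟨hex, hepi⟩
      · show 𝟙 _ ≫ _ = _ ≫ 𝟙 _
        rw [Category.id_comp, Category.comp_id]
      · show 𝟙 _ ≫ _ = _ ≫ 𝟙 _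
        rw [Category.id_comp, Category.comp_id]
    | succ n =>
      rw [quasiIsoAt_iff_exactAt']
      · cases n with
        | zero =>
          rw [HomologicalComplex.exactAt_iff' _ 2 1 0 (by simp) (by simp),
            ShortComplex.moduleCat_exact_iff]
          intro x hx
          have hx' : i x = 0 := by
            have h2 : (HomologicalComplex.sc' (resC P₀ P₁ i) 2 1 0).g
                = ((resC P₀ P₁ i).d 1 0) := rfl
            rw [h2, resC_d10] at hx
            exact hx
          obtain rfl : x = 0 := hi (by rw [hx']; exact (map_zero _).symm)
          exact ⟨0, map_zero _⟩
        | succ n =>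
          rw [HomologicalComplex.exactAt_iff]
          exact ShortComplex.exact_of_isZero_X₂ _
            (@ModuleCat.isZero_of_subsingleton _ _ _ (inferInstanceAs (Subsingleton PUnit)))
      · apply ChainComplex.exactAt_succ_single_obj⟩
include h0 h1 hi hp hexact in
lemma ext_one_vanish (Y : Type) [AddCommGroup Y] [Module A Y]
    (hsub : Subsingleton (egrp A 1 T Y)) :
    ∀ u : ↥P₁ →ₗ[A] Y, ∃ v : ↥P₀ →ₗ[A] Y, v.comp i = u := by
  intro u
  let P := resP h0 h1 hi hp hexact
  let K := P.complex.linearYonedaObj ℤ (ModuleCat.of A Y)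
  have hiso := P.isoExt (R := ℤ) 1 (ModuleCat.of A Y)
  haveI : Subsingleton (↥(K.homology 1)) := by
    have hbij := ConcreteCategory.bijective_of_isIso hiso.inv
    haveI hsub' : Subsingleton ((forget (ModuleCat ℤ)).obj (((Ext ℤ (ModuleCat A) 1).obj
        (Opposite.op (ModuleCat.of A T))).obj (ModuleCat.of A Y))) := hsub
    exact hbij.1.subsingleton
  have hex : K.ExactAt 1 := by
    rw [HomologicalComplex.exactAt_iff_isZero_homology]
    exact ModuleCat.isZero_of_subsingleton _
  rw [HomologicalComplex.exactAt_iff' _ 0 1 2 (by simp) (by simp),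
    ShortComplex.moduleCat_exact_iff] at hex
  have hu : (HomologicalComplex.sc' K 0 1 2).g (show ↥((HomologicalComplex.sc' K 0 1 2).X₂) from ModuleCat.ofHom u) = 0 := by
    haveI : Subsingleton (↥((HomologicalComplex.sc' K 0 1 2).X₃)) := by
      show Subsingleton (ModuleCat.of A PUnit ⟶ ModuleCat.of A Y)
      constructor; intro a b; ext x
      rw [show x = 0 from Subsingleton.elim _ _, map_zero, map_zero]
    exact Subsingleton.elim _ _
  obtain ⟨v, hv⟩ := hex _ hu
  refine ⟨ModuleCat.Hom.hom v, ?_⟩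
  have h2 : (HomologicalComplex.sc' K 0 1 2).f
      = ModuleCat.ofHom (Linear.leftComp ℤ (ModuleCat.of A Y) (P.complex.d 1 0)) := by
    exact ChainComplex.linearYonedaObj_d _ _ _ _ _
  rw [h2] at hv
  have h3 : P.complex.d 1 0 ≫ v = ModuleCat.ofHom u := hv
  rw [show P.complex.d 1 0 = ModuleCat.ofHom i from resC_d10 P₀ P₁ i] at h3
  exact congrArg ModuleCat.Hom.hom h3

end Res2

section Mod
variable {A : Type} [Ring A] {T : Type} [AddCommGroup T] [Module A T]
  {P₀ P₁ : ModuleCat.{0} A}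
  {i : ↥P₁ →ₗ[A] ↥P₀} {p : ↥P₀ →ₗ[A] T}

/-- extension of the property `Ext¹(T, -) = 0` (in resolution form) to finite powers -/
lemma ev_pi (hT : ∀ u : ↥P₁ →ₗ[A] T, ∃ v : ↥P₀ →ₗ[A] T, v.comp i = u) (n : ℕ) :
    ∀ u : ↥P₁ →ₗ[A] (Fin n → T), ∃ v : ↥P₀ →ₗ[A] (Fin n → T), v.comp i = u := by
  intro u
  choose v hv using fun j : Fin n => hT ((LinearMap.proj j).comp u)
  refine ⟨LinearMap.pi v, ?_⟩
  apply LinearMap.ext; intro x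
  funext j
  exact LinearMap.congr_fun (hv j) x

lemma ev_fac (h1 : Module.Projective A ↥P₁)
    (hT : ∀ u : ↥P₁ →ₗ[A] T, ∃ v : ↥P₀ →ₗ[A] T, v.comp i = u)
    (X : Type) [AddCommGroup X] [Module A X]
    (n : ℕ) (q : (Fin n → T) →ₗ[A] X) (hq : Function.Surjective q) :
    ∀ u : ↥P₁ →ₗ[A] X, ∃ v : ↥P₀ →ₗ[A] X, v.comp i = u := by
  intro u
  haveI := h1
  obtain ⟨u', hu'⟩ := Module.projective_lifting_property q u hq
  obtain ⟨v', hv'⟩ := ev_pi hT n u'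
  refine ⟨q.comp v', ?_⟩
  rw [LinearMap.comp_assoc, hv', hu']

lemma lift_through (h0 : Module.Projective A ↥P₀)
    (hp : Function.Surjective p) (hexact : Function.Exact i p)
    (X Y Z : Type) [AddCommGroup X] [Module A X] [AddCommGroup Y] [Module A Y]
    [AddCommGroup Z] [Module A Z]
    (hEX : ∀ u : ↥P₁ →ₗ[A] X, ∃ v : ↥P₀ →ₗ[A] X, v.comp i = u)
    (iX : X →ₗ[A] Y) (pZ : Y →ₗ[A] Z)
    (hinj : Function.Injective iX) (hex : Function.Exact iX pZ)
    (hsurj : Function.Surjective pZ)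
    (g : T →ₗ[A] Z) : ∃ h : T →ₗ[A] Y, pZ.comp h = g := by
  haveI := h0
  obtain ⟨h₀, hh₀⟩ := Module.projective_lifting_property pZ (g.comp p) hsurj
  have hmem : ∀ w, (h₀.comp i) w ∈ LinearMap.range iX := by
    intro w
    have h1 : pZ (h₀ (i w)) = 0 := by
      have h2 := LinearMap.congr_fun hh₀ (i w)
      simp only [LinearMap.coe_comp, Function.comp_apply] at h2
      rw [h2, hexact.apply_apply_eq_zero, map_zero]
    have := (hex (h₀ (i w))).1 h1
    simpa [LinearMap.mem_range] using this
  let e := LinearEquiv.ofInjective iX hinj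
  let u : ↥P₁ →ₗ[A] X :=
    e.symm.toLinearMap.comp ((h₀.comp i).codRestrict (LinearMap.range iX) hmem)
  have hu : ∀ w, iX (u w) = h₀ (i w) := by
    intro w
    have h3 := LinearEquiv.ofInjective_apply (f := iX) (h := hinj)
      (x := e.symm ⟨h₀ (i w), hmem w⟩)
    rw [show (u w : X) = e.symm ⟨h₀ (i w), hmem w⟩ from rfl, ← h3, e.apply_symm_apply]
  obtain ⟨v, hv⟩ := hEX u
  set h₀' := h₀ - iX.comp v with hdef
  have hker2 : LinearMap.ker p ≤ LinearMap.ker h₀' := by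
    intro w hw
    rw [LinearMap.mem_ker] at hw
    obtain ⟨w1, rfl⟩ := (hexact w).1 hw
    rw [LinearMap.mem_ker, hdef, LinearMap.sub_apply, LinearMap.comp_apply]
    rw [show v (i w1) = u w1 from LinearMap.congr_fun hv w1, hu w1, sub_self]
  let q1 := (LinearMap.ker p).liftQ h₀' hker2
  let eq0 := p.quotKerEquivOfSurjective hp
  refine ⟨q1.comp eq0.symm.toLinearMap, ?_⟩
  apply LinearMap.ext; intro t
  obtain ⟨w, rfl⟩ := hp t
  have hq0 : eq0.symm (p w) = Submodule.Quotient.mk w := by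
    rw [LinearEquiv.symm_apply_eq]
    rfl
  rw [LinearMap.comp_apply, LinearMap.comp_apply, LinearEquiv.coe_toLinearMap, hq0,
    show q1 (Submodule.Quotient.mk w) = h₀' w from rfl]
  have : pZ (iX (v w)) = 0 := hex.apply_apply_eq_zero (v w)
  rw [hdef, LinearMap.sub_apply, map_sub, LinearMap.comp_apply, this, sub_zero]
  exact LinearMap.congr_fun hh₀ w

end Mod

section Fac

variable (A : Type) [Ring A]

/-- `fac(T)`: the class of factor modules of finite direct sums of copies of `T`. -/
def facP (T : Type) [AddCommGroup T] [Module A T]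
    (M : Type) [AddCommGroup M] [Module A M] : Prop :=
  ∃ (n : ℕ) (f : (Fin n → T) →ₗ[A] M), Function.Surjective f

/-- `M` is a direct summand of `N`. -/
def isSummand (M N : Type) [AddCommGroup M] [Module A M] [AddCommGroup N] [Module A N] :
    Prop :=
  ∃ (s : M →ₗ[A] N) (r : N →ₗ[A] M), r.comp s = LinearMap.id

/-- `add(T)`: direct summands of finite direct sums of copies of `T`. -/
def addP (T : Type) [AddCommGroup T] [Module A T]
    (M : Type) [AddCommGroup M] [Module A M] : Prop :=
  ∃ n : ℕ, isSummand A M (Fin n → T)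

/-- The module `T` has projective dimension at most one. -/
def pdLeOne (T : Type) [AddCommGroup T] [Module A T] : Prop :=
  ∃ (P₀ P₁ : ModuleCat.{0} A) (_ : Module.Projective A ↥P₀) (_ : Module.Projective A ↥P₁)
    (i : ↥P₁ →ₗ[A] ↥P₀) (p : ↥P₀ →ₗ[A] T),
      Function.Injective i ∧ Function.Surjective p ∧ Function.Exact i p

/-- `M` is a projective object of the exact category `fac(T)`. -/
def projInFac (T : Type) [AddCommGroup T] [Module A T]
    (M : Type) [AddCommGroup M] [Module A M] : Prop :=
  facP A T M ∧ ∀ (X Y Z : Type) [AddCommGroup X] [Module A X] [AddCommGroup Y] [Module A Y]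
    [AddCommGroup Z] [Module A Z] (i : X →ₗ[A] Y) (p : Y →ₗ[A] Z),
      Function.Injective i → Function.Surjective p → Function.Exact i p →
      facP A T X → facP A T Y → facP A T Z →
      ∀ g : M →ₗ[A] Z, ∃ h : M →ₗ[A] Y, p.comp h = g

end Fac

/-- Let `T` be a partial `1`-tilting module over an artin algebra `A`
(i.e. `pd_A(T) ≤ 1` and `Ext¹_A(T, T) = 0`).  Then `fac(T)` is closed under extensions
in `A`-mod, and `T` is a projective object of the exact category `fac(T)`. -/
theorem fac_extension_closed_and_proj_of_partial_tilting
    (R A : Type) [CommRing R] [IsArtinianRing R] [Ring A] [Algebra R A] [Module.Finite R A]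
    (T : Type) [AddCommGroup T] [Module A T] [Module.Finite A T]
    (hpd : pdLeOne A T) (hrigid : Subsingleton (egrp A 1 T T)) :
    (∀ (X Y Z : Type) [AddCommGroup X] [Module A X] [AddCommGroup Y] [Module A Y]
      [AddCommGroup Z] [Module A Z] (i : X →ₗ[A] Y) (p : Y →ₗ[A] Z),
        Function.Injective i → Function.Surjective p → Function.Exact i p →
        facP A T X → facP A T Z → facP A T Y) ∧
      projInFac A T T := by
  obtain ⟨P₀, P₁, h0, h1, i, p, hi, hp, hexact⟩ := hpd
  have hT : ∀ u : ↥P₁ →ₗ[A] T, ∃ v : ↥P₀ →ₗ[A] T, v.comp i = u :=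
    ext_one_vanish h0 h1 hi hp hexact T hrigid
  have facT : facP A T T := ⟨1, LinearMap.proj 0, fun t => ⟨fun _ => t, rfl⟩⟩
  have lift_lemma : ∀ (X Y Z : Type) [AddCommGroup X] [Module A X] [AddCommGroup Y] [Module A Y]
      [AddCommGroup Z] [Module A Z] (iX : X →ₗ[A] Y) (pZ : Y →ₗ[A] Z),
      Function.Injective iX → Function.Surjective pZ → Function.Exact iX pZ →
      facP A T X → ∀ g : T →ₗ[A] Z, ∃ h : T →ₗ[A] Y, pZ.comp h = g := by
    intro X Y Z _ _ _ _ _ _ iX pZ hinj hsurj hex hX g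
    obtain ⟨n, q, hq⟩ := hX
    exact lift_through h0 hp hexact X Y Z (ev_fac h1 hT X n q hq) iX pZ hinj hex hsurj g
  constructor
  · intro X Y Z _ _ _ _ _ _ iX pZ hinj hsurj hex hX hZ
    obtain ⟨m, gZ, hgZ⟩ := hZ
    choose hmap hprop using fun j : Fin m =>
      lift_lemma X Y Z iX pZ hinj hsurj hex hX (gZ.comp (LinearMap.single A (fun _ => T) j))
    set h : (Fin m → T) →ₗ[A] Y := ∑ j, (hmap j).comp (LinearMap.proj j) with hdef
    have hph : ∀ t, pZ (h t) = gZ t := by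
      intro t
      rw [hdef]
      rw [LinearMap.sum_apply, map_sum]
      have : ∀ j : Fin m, pZ ((hmap j).comp (LinearMap.proj j) t) = gZ (Pi.single j (t j)) := by
        intro j
        exact LinearMap.congr_fun (hprop j) (t j)
      rw [Finset.sum_congr rfl (fun j _ => this j), ← map_sum]
      congr 1
      exact Finset.univ_sum_single t
    obtain ⟨n, f, hf⟩ := hX
    refine ⟨n + m, (iX.comp f).comp (LinearMap.funLeft A T (Fin.castAdd m))
      + h.comp (LinearMap.funLeft A T (Fin.natAdd n)), ?_⟩
    intro y
    obtain ⟨t, ht⟩ := hgZ (pZ y)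
    have h0' : pZ (y - h t) = 0 := by rw [map_sub, hph, ht, sub_self]
    obtain ⟨x, hx⟩ := (hex _).1 h0'
    obtain ⟨s, rfl⟩ := hf x
    refine ⟨Fin.append s t, ?_⟩
    have e1 : (Fin.append s t) ∘ (Fin.castAdd m) = s := by
      funext j; exact Fin.append_left s t j
    have e2 : (Fin.append s t) ∘ (Fin.natAdd n) = t := by
      funext j; exact Fin.append_right s t j
    show iX (f ((Fin.append s t) ∘ Fin.castAdd m)) + h ((Fin.append s t) ∘ Fin.natAdd n) = y
    rw [e1, e2, hx]
    exact sub_add_cancel y (h t)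
  · exact ⟨facT, fun X Y Z _ _ _ _ _ _ iX pZ hinj hsurj hex hX hY hZ g =>
      lift_lemma X Y Z iX pZ hinj hsurj hex hX g⟩
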